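/- Let A and B be d×d integer matrices, let p be an integer, and let M be a positive integer such that A^M = I + pB. Let x, y ∈ ℤ^d and define u_n = xᵀ Aⁿ y for n ∈ ℕ. Then for all k, ℓ ∈ ℕ: Σ_{j=0}^{k} (−1)^{k−j} C(k,j) u_{Mj+ℓ} = p^k · (xᵀ B^k A^ℓ y). That is, the k-th iterated forward difference at 0 of the sequence n ↦ u_{Mn+ℓ} equals p^k xᵀ B^k A^ℓ y. -/

import Mathlib

open Matrix Finset

lemma dot_sum_mulVec {d : ℕ} (x y : Fin d → ℤ) (s : Finset ℕ)
    (f : ℕ → Matrix (Fin d) (Fin d) ℤ) :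
    x ⬝ᵥ (∑ j ∈ s, f j) *ᵥ y = ∑ j ∈ s, x ⬝ᵥ (f j) *ᵥ y := by
  induction s using Finset.induction_on with
  | empty => simp [Matrix.zero_mulVec]
  | insert a s h ih => simp [Finset.sum_insert h, Matrix.add_mulVec, dotProduct_add, ih]

theorem lrs_subsequence_forward_difference (d : ℕ) (A B : Matrix (Fin d) (Fin d) ℤ)
    (p : ℤ) (M : ℕ) (hM : 0 < M) (hAM : A ^ M = 1 + p • B)
    (x y : Fin d → ℤ) (u : ℕ → ℤ) (hu : ∀ n, u n = x ⬝ᵥ (A ^ n) *ᵥ y) :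
    ∀ k ℓ : ℕ, ∑ j ∈ Finset.range (k + 1),
        (-1 : ℤ) ^ (k - j) * (k.choose j : ℤ) * u (M * j + ℓ) =
      p ^ k * (x ⬝ᵥ (B ^ k * A ^ ℓ) *ᵥ y) := by
  intro k ℓ
  have key : (p • B) ^ k
      = ∑ j ∈ Finset.range (k + 1), ((-1 : ℤ) ^ (k - j) * (k.choose j : ℤ)) • (A ^ M) ^ j := by
    have hc : Commute (A ^ M) (-1 : Matrix (Fin d) (Fin d) ℤ) := Commute.neg_one_right _
    have hpB : p • B = A ^ M + (-1) := by rw [hAM]; abel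
    rw [hpB, hc.add_pow k]
    refine Finset.sum_congr rfl fun j hj => ?_
    have h1 : ((-1 : Matrix (Fin d) (Fin d) ℤ)) ^ (k - j) = ((-1 : ℤ) ^ (k - j)) • 1 := by
      rcases Nat.even_or_odd (k - j) with h | h
      · simp [h.neg_one_pow]
      · simp [h.neg_one_pow]
    have h2 : ((k.choose j : ℕ) : Matrix (Fin d) (Fin d) ℤ)
        = ((k.choose j : ℤ)) • (1 : Matrix (Fin d) (Fin d) ℤ) := by
      simp [zsmul_eq_mul]
    rw [h1, h2]
    simp only [mul_smul_comm, smul_mul_assoc, mul_one, smul_smul]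
    rw [mul_comm]
  calc ∑ j ∈ Finset.range (k + 1), (-1 : ℤ) ^ (k - j) * (k.choose j : ℤ) * u (M * j + ℓ)
      = ∑ j ∈ Finset.range (k + 1),
        x ⬝ᵥ ((((-1 : ℤ) ^ (k - j) * (k.choose j : ℤ)) • (A ^ M) ^ j) * A ^ ℓ) *ᵥ y := by
        refine Finset.sum_congr rfl fun j _ => ?_
        rw [hu, pow_add, pow_mul, Matrix.smul_mul, smul_mulVec, dotProduct_smul,
          smul_eq_mul]
    _ = x ⬝ᵥ ((∑ j ∈ Finset.range (k + 1),
          ((-1 : ℤ) ^ (k - j) * (k.choose j : ℤ)) • (A ^ M) ^ j) * A ^ ℓ) *ᵥ y := by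
        rw [Finset.sum_mul, dot_sum_mulVec]
    _ = x ⬝ᵥ ((p • B) ^ k * A ^ ℓ) *ᵥ y := by rw [← key]
    _ = p ^ k * (x ⬝ᵥ (B ^ k * A ^ ℓ) *ᵥ y) := by
        rw [smul_pow, Matrix.smul_mul, smul_mulVec, dotProduct_smul, smul_eq_mul]
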